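/- For every natural number n, the set of partitions λ ∈ S1(n) with overline designated summands whose Δ-image has β-component equal to the partition (1) (i.e., y_λ(1) = 1 and y_λ(i) = 0 for all i ≥ 2) is exactly the union B_1(n) ∪ B_2(n) ∪ B_3(n) ∪ B_4(n) ∪ B_5(n), and the five sets B_1(n), ..., B_5(n) are pairwise disjoint. -/

import Mathlib

/-- `S1 n`: partitions of `n` with overline designated summands, encoded as triples
`(f, g, k)` where `f g : ℕ → ℕ` are the multiplicity/designation functions on the positive
integers (we require `f 0 = g 0 = 0`), finitely supported, with `∑ i * f i = n`,
`k ≥ 1`, `f k ≥ 1`, `1 ≤ g i ≤ f i` whenever `f i ≥ 1`, and `g i = 0` whenever `f i = 0`. -/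
def S1 (n : ℕ) : Set ((ℕ → ℕ) × (ℕ → ℕ) × ℕ) :=
  {p | p.1 0 = 0 ∧ p.2.1 0 = 0 ∧
    (Function.support p.1).Finite ∧ (Function.support p.2.1).Finite ∧
    (∑ᶠ i, i * p.1 i) = n ∧
    1 ≤ p.2.2 ∧ 1 ≤ p.1 p.2.2 ∧
    (∀ i, 1 ≤ p.1 i → 1 ≤ p.2.1 i ∧ p.2.1 i ≤ p.1 i) ∧
    (∀ i, p.1 i = 0 → p.2.1 i = 0)}

/-- The map `Δ` sending `(f, g, k)` to `(x, y, k)`: if `f i = 0` then `x i = y i = 0`;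
if `f i ≥ 1` and (`i = k` or `g i ≥ 2`) then `x i = g i`, `y i = f i - g i`;
if `f i ≥ 1`, `i ≠ k` and `g i = 1` (i.e. `g i ≤ 1`) then `x i = 0`, `y i = f i`. -/
def delta (p : (ℕ → ℕ) × (ℕ → ℕ) × ℕ) : (ℕ → ℕ) × (ℕ → ℕ) × ℕ :=
  ⟨fun i => if p.1 i = 0 then 0 else if i = p.2.2 ∨ 2 ≤ p.2.1 i then p.2.1 i else 0,
   fun i => if p.1 i = 0 then 0 else if i = p.2.2 ∨ 2 ≤ p.2.1 i then p.1 i - p.2.1 i else p.1 i,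
   p.2.2⟩

/-- `y` is the multiplicity function of the partition `(1)` with a single part equal to 1. -/
def isPartitionOne (y : ℕ → ℕ) : Prop := y 1 = 1 ∧ ∀ i, 2 ≤ i → y i = 0

/-- `B1 n`: `(f,g,k) ∈ S1 n` with `f i = g i` for all `i ≠ 1`, `k ≠ 1`, `f 1 ≥ 3`,
`g 1 = f 1 - 1`, and `f i ≠ 1` for all `i ∉ {1, k}`. -/
def B1 (n : ℕ) : Set ((ℕ → ℕ) × (ℕ → ℕ) × ℕ) :=
  {p ∈ S1 n | (∀ i, i ≠ 1 → p.1 i = p.2.1 i) ∧ p.2.2 ≠ 1 ∧ 3 ≤ p.1 1 ∧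
    p.2.1 1 = p.1 1 - 1 ∧ (∀ i, i ≠ 1 → i ≠ p.2.2 → p.1 i ≠ 1)}

/-- `B2 n`: `(f,g,k) ∈ S1 n` with `f i = g i ≠ 1` for all `i ≠ 1`, `k = 1`, `f 1 ≥ 2`
and `g 1 = f 1 - 1`. -/
def B2 (n : ℕ) : Set ((ℕ → ℕ) × (ℕ → ℕ) × ℕ) :=
  {p ∈ S1 n | (∀ i, i ≠ 1 → p.1 i = p.2.1 i ∧ p.1 i ≠ 1) ∧ p.2.2 = 1 ∧ 2 ≤ p.1 1 ∧
    p.2.1 1 = p.1 1 - 1}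

/-- `B3 n`: `(f,g,k) ∈ S1 n` with `f 1 = g 1 = 1`, `f i = g i ≠ 1` for all `i ≠ 1`,
and `k ≠ 1`. -/
def B3 (n : ℕ) : Set ((ℕ → ℕ) × (ℕ → ℕ) × ℕ) :=
  {p ∈ S1 n | p.1 1 = 1 ∧ p.2.1 1 = 1 ∧ (∀ i, i ≠ 1 → p.1 i = p.2.1 i ∧ p.1 i ≠ 1) ∧
    p.2.2 ≠ 1}

/-- `B4 n`: `(f,g,k) ∈ S1 n` with `f 1 = g 1 = 1`, `k ≠ 1`, `f k = g k = 1`,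
`f i = g i ≠ 1` for all `i ∉ {1, k}`, and some `j ∉ {1, k}` with `f j = g j ≥ 2`. -/
def B4 (n : ℕ) : Set ((ℕ → ℕ) × (ℕ → ℕ) × ℕ) :=
  {p ∈ S1 n | p.1 1 = 1 ∧ p.2.1 1 = 1 ∧ p.2.2 ≠ 1 ∧ p.1 p.2.2 = 1 ∧ p.2.1 p.2.2 = 1 ∧
    (∀ i, i ≠ 1 → i ≠ p.2.2 → p.1 i = p.2.1 i ∧ p.1 i ≠ 1) ∧
    (∃ j, j ≠ 1 ∧ j ≠ p.2.2 ∧ p.1 j = p.2.1 j ∧ 2 ≤ p.1 j)}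

/-- `B5 n`: `(f,g,k) ∈ S1 n` with `k ≠ 1`, `f k = g k = 1`, `f 1 = g 1 = 1` and
`f i = 0` for all `i ∉ {1, k}`. -/
def B5 (n : ℕ) : Set ((ℕ → ℕ) × (ℕ → ℕ) × ℕ) :=
  {p ∈ S1 n | p.2.2 ≠ 1 ∧ p.1 p.2.2 = 1 ∧ p.2.1 p.2.2 = 1 ∧ p.1 1 = 1 ∧ p.2.1 1 = 1 ∧
    ∀ i, i ≠ 1 → i ≠ p.2.2 → p.1 i = 0}

/-- The set of `λ ∈ S1 n` whose `Δ`-image has `β`-component equal to the partition `(1)`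
is exactly `B1 n ∪ B2 n ∪ B3 n ∪ B4 n ∪ B5 n`, and the `Bᵢ n` are pairwise disjoint. -/
theorem B_decomposition (n : ℕ) :
    {p ∈ S1 n | isPartitionOne (delta p).2.1} = B1 n ∪ B2 n ∪ B3 n ∪ B4 n ∪ B5 n ∧
    List.Pairwise Disjoint [B1 n, B2 n, B3 n, B4 n, B5 n] := by
  constructor
  · ext p
    obtain ⟨f, g, k⟩ := p
    simp only [Set.mem_union, Set.mem_sep_iff, Set.mem_setOf_eq, B1, B2, B3, B4, B5,
      delta, isPartitionOne]
    constructor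
    · rintro ⟨hS, hy1, hy2⟩
      obtain ⟨hf0, hg0, hff, hgf, hsum, hk1, hfk, hfg, hgz⟩ := hS
      have hS' : (f, g, k) ∈ S1 n :=
        ⟨hf0, hg0, hff, hgf, hsum, hk1, hfk, hfg, hgz⟩
      dsimp only at hf0 hg0 hsum hk1 hfk hfg hgz
      have key : ∀ i, i ≠ 1 → f i = g i ∧ (f i = 1 → i = k) := by
        intro i hi
        rcases Nat.eq_zero_or_pos (f i) with h0 | h1
        · have := hgz i h0
          exact ⟨by omega, fun h => by omega⟩
        · have hgi := hfg i h1
          rcases Nat.lt_or_ge i 2 with hlt | hge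
          · interval_cases i
            · omega
            · omega
          · have hy := hy2 i hge
            rw [if_neg (by omega)] at hy
            by_cases hc : i = k ∨ 2 ≤ g i
            · rw [if_pos hc] at hy
              exact ⟨by omega, fun h1 => by rcases hc with hc | hc <;> omega⟩
            · rw [if_neg hc] at hy
              omega
      have hg1 := hfg 1
      rcases Nat.eq_zero_or_pos (f 1) with hz1 | hz1
      · rw [if_pos hz1] at hy1; omega
      rw [if_neg (by omega)] at hy1
      by_cases hk : k = 1
      · -- B2
        left; left; left; right
        refine ⟨hS', ?_, hk, ?_, ?_⟩
        · intro i hi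
          have := key i hi
          constructor
          · exact this.1
          · intro h; exact hi (by rw [this.2 h, hk])
        · rw [if_pos (Or.inl hk.symm)] at hy1
          omega
        · rw [if_pos (Or.inl hk.symm)] at hy1
          have := hg1 (by omega)
          omega
      · by_cases hg2 : 2 ≤ g 1
        · -- B1
          left; left; left; left
          rw [if_pos (Or.inr hg2)] at hy1
          refine ⟨hS', fun i hi => (key i hi).1, hk, by omega, by omega, ?_⟩
          intro i hi hik h1
          exact hik ((key i hi).2 h1)
        · rw [if_neg (by push_neg; exact ⟨fun h => hk h.symm, by omega⟩)] at hy1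
          have hgg1 : g 1 = 1 := by have := hg1 (by omega); omega
          have hgk := hfg k hfk
          have hkk := key k (by omega)
          by_cases hfk1 : f k = 1
          · by_cases hex : ∃ j, j ≠ 1 ∧ j ≠ k ∧ 2 ≤ f j
            · -- B4
              left; right
              obtain ⟨j, hj1, hjk, hj2⟩ := hex
              refine ⟨hS', hy1, by omega, hk, hfk1, by omega, ?_, j, hj1, hjk,
                (key j hj1).1, hj2⟩
              intro i hi hik
              refine ⟨(key i hi).1, fun h => hik ((key i hi).2 h)⟩
            · -- B5
              right
              refine ⟨hS', hk, hfk1, by omega, hy1, by omega, ?_⟩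
              intro i hi hik
              push_neg at hex
              have h1 := (key i hi).2
              have h2 := hex i hi hik
              omega
          · -- B3
            left; left; right
            refine ⟨hS', hy1, by omega, ?_, hk⟩
            intro i hi
            by_cases hik : i = k
            · subst hik; exact ⟨hkk.1, hfk1⟩
            · exact ⟨(key i hi).1, fun h => hik ((key i hi).2 h)⟩
    · intro h
      have hS : (f, g, k) ∈ S1 n := by
        rcases h with ((((h | h) | h) | h) | h) <;> exact h.1
      obtain ⟨hf0, hg0, hff, hgf, hsum, hk1, hfk, hfg, hgz⟩ := hS
      have hS' : (f, g, k) ∈ S1 n :=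
        ⟨hf0, hg0, hff, hgf, hsum, hk1, hfk, hfg, hgz⟩
      dsimp only at hf0 hg0 hsum hk1 hfk hfg hgz
      refine ⟨hS', ?_, ?_⟩
      · -- y 1 = 1
        rcases h with ((((⟨_, hall, hk, h3, hgeq, _⟩ | ⟨_, hall, hk, h2, hgeq⟩) |
            ⟨_, hf1, hgg1, hall, hk⟩) | ⟨_, hf1, hgg1, hk, hfkk, hgkk, hall, hex⟩) |
            ⟨_, hk, hfkk, hgkk, hf1, hgg1, hzero⟩)
        · rw [if_neg (by omega), if_pos (Or.inr (by omega))]; omega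
        · rw [if_neg (by omega), if_pos (Or.inl hk.symm)]; omega
        · rw [if_neg (by omega), if_neg (by push_neg; exact ⟨fun h => hk h.symm, by omega⟩)]
          exact hf1
        · rw [if_neg (by omega), if_neg (by push_neg; exact ⟨fun h => hk h.symm, by omega⟩)]
          exact hf1
        · rw [if_neg (by omega), if_neg (by push_neg; exact ⟨fun h => hk h.symm, by omega⟩)]
          exact hf1
      · -- y i = 0 for i ≥ 2
        intro i hi
        rcases Nat.eq_zero_or_pos (f i) with h0 | hpos
        · rw [if_pos h0]
        rw [if_neg (by omega)]
        have hgi := hfg i hpos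
        rcases h with ((((⟨_, hall, hk, h3, hgeq, hne1⟩ | ⟨_, hall, hk, h2, hgeq⟩) |
            ⟨_, hf1, hgg1, hall, hk⟩) | ⟨_, hf1, hgg1, hk, hfkk, hgkk, hall, hex⟩) |
            ⟨_, hk, hfkk, hgkk, hf1, hgg1, hzero⟩)
        · have heq := hall i (by omega)
          by_cases hik : i = k
          · subst hik; rw [if_pos (Or.inl rfl)]; omega
          · have := hne1 i (by omega) hik
            rw [if_pos (Or.inr (by omega))]; omega
        · have heq := hall i (by omega)
          rw [if_pos (Or.inr (by omega))]; omega
        · have heq := hall i (by omega)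
          rw [if_pos (Or.inr (by omega))]; omega
        · by_cases hik : i = k
          · subst hik; rw [if_pos (Or.inl rfl)]; omega
          · have heq := hall i (by omega) hik
            rw [if_pos (Or.inr (by omega))]; omega
        · by_cases hik : i = k
          · subst hik; rw [if_pos (Or.inl rfl)]; omega
          · have := hzero i (by omega) hik
            omega
  · -- pairwise disjointness
    refine List.Pairwise.cons ?_ (List.Pairwise.cons ?_ (List.Pairwise.cons ?_
      (List.Pairwise.cons ?_ (List.Pairwise.cons (fun a ha => absurd ha
        (List.not_mem_nil (a := a))) List.Pairwise.nil))))
    · intro s hs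
      rw [Set.disjoint_left]
      rintro ⟨f, g, k⟩ ⟨_, _, hk1, h13, _⟩ hmem
      fin_cases hs
      · exact hk1 (hmem.2.2.1)
      · exact absurd hmem.2.1 (by omega)
      · exact absurd hmem.2.1 (by omega)
      · exact absurd hmem.2.2.2.2.1 (by omega)
    · intro s hs
      rw [Set.disjoint_left]
      rintro ⟨f, g, k⟩ ⟨_, _, hk1, _⟩ hmem
      fin_cases hs
      · exact hmem.2.2.2.2 hk1
      · exact hmem.2.2.2.1 hk1
      · exact hmem.2.1 hk1
    · intro s hs
      rw [Set.disjoint_left]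
      rintro ⟨f, g, k⟩ ⟨_, _, _, hall, hk⟩ hmem
      fin_cases hs
      · exact absurd (hall k hmem.2.2.2.1).2 (by simpa using hmem.2.2.2.2.1)
      · exact absurd (hall k hmem.2.1).2 (by simpa using hmem.2.2.1)
    · intro s hs
      rw [Set.disjoint_left]
      rintro ⟨f, g, k⟩ ⟨_, _, _, hk, _, _, _, j, hj1, hjk, _, hj2⟩ hmem
      fin_cases hs
      have := hmem.2.2.2.2.2.2 j hj1 hjk
      omega
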